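/- Consider the 3-outcome qubit POVM with effects A_i = (2/3)|a_i⟩⟨a_i|, where a_1 = (1,0), a_2 = (−1/2, √3/2), a_3 = (−1/2, −√3/2). Its probability range equals the disk of radius 1/√6 centered at (1/3,1/3,1/3) inside the probability simplex Δ_3: {(Tr(ρA_1), Tr(ρA_2), Tr(ρA_3)) : ρ density matrix on ℂ²} = {p ∈ Δ_3 : ‖p − (1/3,1/3,1/3)‖² ≤ 1/6}. -/

import Mathlib

open Matrix BigOperators
open scoped ComplexOrder

/-- The three unit vectors of the trine qubit POVM. -/
noncomputable def trineVec : Fin 3 → Fin 2 → ℂ :=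
  ![![1, 0],
    ![-(1/2 : ℂ), ((Real.sqrt 3 : ℝ) : ℂ) / 2],
    ![-(1/2 : ℂ), -(((Real.sqrt 3 : ℝ) : ℂ) / 2)]]

/-- The trine POVM effects `Aᵢ = (2/3)|aᵢ⟩⟨aᵢ|`. -/
noncomputable def trinePOVM (i : Fin 3) : Matrix (Fin 2) (Fin 2) ℂ :=
  (2/3 : ℂ) • Matrix.vecMulVec (trineVec i) (star (trineVec i))

lemma trine_h3C : ((Real.sqrt 3 : ℝ) : ℂ) * ((Real.sqrt 3 : ℝ) : ℂ) = 3 := by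
  have := Real.mul_self_sqrt (by norm_num : (0:ℝ) ≤ 3)
  exact_mod_cast congrArg (Complex.ofReal) this

lemma trine_trace0 (ρ : Matrix (Fin 2) (Fin 2) ℂ) :
    (ρ * trinePOVM 0).trace = (2/3 : ℂ) * ρ 0 0 := by
  simp [Matrix.trace, Matrix.mul_apply, trinePOVM, trineVec, Matrix.vecMulVec_apply,
    Fin.sum_univ_succ, Matrix.diag, -Matrix.cons_vecMulVec]
  ring

lemma trine_trace1 (ρ : Matrix (Fin 2) (Fin 2) ℂ) :
    (ρ * trinePOVM 1).trace
      = (1/6 : ℂ) * (ρ 0 0 - ((Real.sqrt 3 : ℝ) : ℂ) * (ρ 0 1 + ρ 1 0)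
          + 3 * ρ 1 1) := by
  simp [Matrix.trace, Matrix.mul_apply, trinePOVM, trineVec, Matrix.vecMulVec_apply,
    Fin.sum_univ_succ, Matrix.diag, map_ofNat, Complex.conj_ofReal, -Matrix.cons_vecMulVec]
  linear_combination (ρ 1 1 / 6) * trine_h3C

lemma trine_trace2 (ρ : Matrix (Fin 2) (Fin 2) ℂ) :
    (ρ * trinePOVM 2).trace
      = (1/6 : ℂ) * (ρ 0 0 + ((Real.sqrt 3 : ℝ) : ℂ) * (ρ 0 1 + ρ 1 0)
          + 3 * ρ 1 1) := by
  simp [Matrix.trace, Matrix.mul_apply, trinePOVM, trineVec, Matrix.vecMulVec_apply,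
    Fin.sum_univ_succ, Matrix.diag, map_ofNat, Complex.conj_ofReal, -Matrix.cons_vecMulVec]
  linear_combination (ρ 1 1 / 6) * trine_h3C

set_option maxHeartbeats 2000000 in
/-- The probability range of the trine qubit POVM is the disk of radius `1/√6` centered
at `(1/3,1/3,1/3)` inside the probability simplex `Δ₃`. -/
theorem trine_povm_probRange :
    {p : Fin 3 → ℝ | ∃ ρ : Matrix (Fin 2) (Fin 2) ℂ, ρ.PosSemidef ∧ ρ.trace = 1 ∧
        ∀ i, (ρ * trinePOVM i).trace = (p i : ℂ)}
      = {p : Fin 3 → ℝ | p ∈ stdSimplex ℝ (Fin 3) ∧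
          ∑ i, (p i - 1/3) ^ 2 ≤ 1/6} := by
  have hr : Real.sqrt 3 ^ 2 = 3 := Real.sq_sqrt (by norm_num)
  have hr0 : (0:ℝ) ≤ Real.sqrt 3 := Real.sqrt_nonneg 3
  ext p
  simp only [Set.mem_setOf_eq]
  constructor
  · rintro ⟨ρ, hPSD, htr, hp⟩
    have herm := hPSD.1
    have h10 : ρ 1 0 = (starRingEnd ℂ) (ρ 0 1) := by
      have := congrFun (congrFun herm 1) 0
      simp [Matrix.conjTranspose_apply] at this
      exact this.symm
    set a : ℝ := (ρ 0 0).re with ha_def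
    set u : ℝ := (ρ 0 1).re with hu_def
    have h00 : ρ 0 0 = (a : ℂ) := by
      have := congrFun (congrFun herm 0) 0
      simp [Matrix.conjTranspose_apply] at this
      exact ((Complex.conj_eq_iff_re).mp this).symm
    have htr2 : ρ 0 0 + ρ 1 1 = 1 := by
      simpa [Matrix.trace, Fin.sum_univ_two, Matrix.diag] using htr
    have h11 : ρ 1 1 = ((1 - a : ℝ) : ℂ) := by
      push_cast
      linear_combination htr2 - h00
    have hq : ∀ t : ℝ, 0 ≤ a * (t * t) + (2*u) * t + (1-a) := by
      intro t
      have hx := hPSD.dotProduct_mulVec_nonneg ![(t:ℂ), 1]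
      have e : (star ![(t:ℂ), 1]) ⬝ᵥ ρ *ᵥ ![(t:ℂ), 1]
          = ((a * (t*t) + (2*u) * t + (1-a) : ℝ) : ℂ) := by
        simp [dotProduct, Matrix.mulVec, Fin.sum_univ_two, h00, h11, h10]
        rw [Complex.ext_iff]
        constructor <;>
          simp [Complex.add_re, Complex.add_im, Complex.mul_re, Complex.mul_im] <;> ring
      rw [e, Complex.zero_le_real] at hx
      exact hx
    have hu2 : u^2 ≤ a * (1-a) := by
      have hd := discrim_le_zero hq
      rw [discrim] at hd
      nlinarith [hd]
    have ha0 : 0 ≤ a := by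
      have hx := hPSD.dotProduct_mulVec_nonneg ![1, 0]
      have e : (star ![(1:ℂ), 0]) ⬝ᵥ ρ *ᵥ ![(1:ℂ), 0] = ((a : ℝ) : ℂ) := by
        simp [dotProduct, Matrix.mulVec, Fin.sum_univ_two, h00]
      rw [e, Complex.zero_le_real] at hx
      exact hx
    have ha1 : a ≤ 1 := by nlinarith [hq 0]
    have e0 : (2/3 : ℝ) * a = p 0 := by
      have h := hp 0
      rw [trine_trace0, h00] at h
      exact Complex.ofReal_injective (by push_cast; linear_combination h)
    have h2u : ρ 0 1 + (starRingEnd ℂ) (ρ 0 1) = ((2*u : ℝ) : ℂ) := by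
      rw [Complex.add_conj]
    have e1 : (1/6 : ℝ) * (a - Real.sqrt 3 * (2*u) + 3*(1-a)) = p 1 := by
      have h := hp 1
      rw [trine_trace1, h00, h11, h10, h2u] at h
      push_cast at h
      exact Complex.ofReal_injective (by push_cast; linear_combination h)
    have e2 : (1/6 : ℝ) * (a + Real.sqrt 3 * (2*u) + 3*(1-a)) = p 2 := by
      have h := hp 2
      rw [trine_trace2, h00, h11, h10, h2u] at h
      push_cast at h
      exact Complex.ofReal_injective (by push_cast; linear_combination h)
    have hru : Real.sqrt 3 ^ 2 * u ^ 2 = 3 * u ^ 2 := by rw [hr]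
    have hq0 : 0 ≤ p 0 := by nlinarith
    have hq1 : 0 ≤ p 1 := by
      nlinarith [hu2, hru, sq_nonneg u, sq_nonneg (3 - 4*a), hr0, ha0, ha1, e1]
    have hq2 : 0 ≤ p 2 := by
      nlinarith [hu2, hru, sq_nonneg u, sq_nonneg (3 - 4*a), hr0, ha0, ha1, e2]
    refine ⟨⟨fun i => ?_, ?_⟩, ?_⟩
    · fin_cases i
      · exact hq0
      · exact hq1
      · exact hq2
    · rw [Fin.sum_univ_three]; linarith
    · rw [Fin.sum_univ_three, ← e0, ← e1, ← e2]
      nlinarith [hu2, hru]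
  · rintro ⟨hsimp, hdisk⟩
    have hnn : ∀ i, 0 ≤ p i := hsimp.1
    have hsum : p 0 + p 1 + p 2 = 1 := by
      have := hsimp.2
      rwa [Fin.sum_univ_three] at this
    rw [Fin.sum_univ_three] at hdisk
    have hp2 : p 2 = 1 - p 0 - p 1 := by linarith
    rw [hp2] at hdisk
    obtain ⟨a, ha_def⟩ : ∃ a : ℝ, a = 3/2 * p 0 := ⟨_, rfl⟩
    obtain ⟨u, hu_def⟩ : ∃ u : ℝ, u = Real.sqrt 3 * (1 - p 0 - 2 * p 1) / 2 := ⟨_, rfl⟩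
    have hu2sub : u^2 = 3 * (1 - p 0 - 2*p 1)^2 / 4 := by
      rw [hu_def, div_pow, mul_pow, hr]
      norm_num
    have key : u^2 + (a - 1/2)^2 ≤ 1/4 := by
      rw [hu2sub, ha_def]
      nlinarith [hdisk]
    have ha0 : 0 ≤ a := by
      have := hnn 0; rw [ha_def]; linarith
    have ha1 : a ≤ 1 := by nlinarith [key, sq_nonneg u]
    have had : u^2 ≤ a * (1-a) := by nlinarith [key]
    refine ⟨!![((a:ℝ):ℂ), ((u:ℝ):ℂ); ((u:ℝ):ℂ), ((1-a:ℝ):ℂ)], Matrix.PosSemidef.of_dotProduct_mulVec_nonneg ?_ ?_, ?_, ?_⟩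
    · ext i j
      fin_cases i <;> fin_cases j <;>
        simp [Matrix.conjTranspose_apply, Complex.conj_ofReal]
    · intro x
      have e : (star x) ⬝ᵥ (!![((a:ℝ):ℂ), ((u:ℝ):ℂ); ((u:ℝ):ℂ), ((1-a:ℝ):ℂ)]) *ᵥ x
          = ((a * Complex.normSq (x 0) + 2*u*((starRingEnd ℂ) (x 0) * x 1).re
              + (1-a) * Complex.normSq (x 1) : ℝ) : ℂ) := by
        simp [dotProduct, Matrix.mulVec, Fin.sum_univ_two]
        rw [Complex.ext_iff]
        constructor <;>
          simp [Complex.normSq_apply, Complex.add_re, Complex.add_im,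
            Complex.mul_re, Complex.mul_im] <;> ring
      rw [e, Complex.zero_le_real]
      set X := Complex.normSq (x 0) with hX_def
      set Y := Complex.normSq (x 1) with hY_def
      set c := ((starRingEnd ℂ) (x 0) * x 1).re with hc_def
      have hX : 0 ≤ X := Complex.normSq_nonneg _
      have hY : 0 ≤ Y := Complex.normSq_nonneg _
      have hc : c^2 ≤ X * Y := by
        have h1 : c^2 ≤ Complex.normSq ((starRingEnd ℂ) (x 0) * x 1) := by
          rw [Complex.normSq_apply]
          nlinarith [sq_nonneg (((starRingEnd ℂ) (x 0) * x 1).im)]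
        rwa [Complex.normSq_mul, Complex.normSq_conj] at h1
      have hprod : u^2 * c^2 ≤ (a*(1-a)) * (X*Y) :=
        mul_le_mul had hc (sq_nonneg c) (by nlinarith [key])
      nlinarith [hprod, sq_nonneg (a*X - (1-a)*Y), mul_nonneg ha0 hX,
        mul_nonneg (by linarith : (0:ℝ) ≤ 1-a) hY, hX, hY,
        mul_nonneg (mul_nonneg ha0 hX) (mul_nonneg (by linarith : (0:ℝ) ≤ 1-a) hY)]
    · simp [Matrix.trace, Fin.sum_univ_two, Matrix.diag]
    · intro i
      fin_cases i
      · show (_ * trinePOVM 0).trace = ((p 0 : ℝ) : ℂ)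
        rw [trine_trace0]
        have hres : (2/3 : ℝ) * a = p 0 := by rw [ha_def]; ring
        simp only [Matrix.cons_val', Matrix.cons_val_zero, Matrix.empty_val',
          Matrix.cons_val_fin_one, Matrix.of_apply]
        have hC := congrArg Complex.ofReal hres
        push_cast at hC
        linear_combination hC
      · show (_ * trinePOVM 1).trace = ((p 1 : ℝ) : ℂ)
        rw [trine_trace1]
        have hres : (1/6 : ℝ) * (a - Real.sqrt 3 * (u + u) + 3*(1-a)) = p 1 := by
          rw [ha_def, hu_def]
          linear_combination (-(1 - p 0 - 2*p 1)/6) * hr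
        simp only [Matrix.cons_val', Matrix.cons_val_zero, Matrix.cons_val_one,
          Matrix.head_cons, Matrix.empty_val', Matrix.cons_val_fin_one,
          Matrix.of_apply, Matrix.head_fin_const]
        have hC := congrArg Complex.ofReal hres
        push_cast at hC
        push_cast
        linear_combination hC
      · show (_ * trinePOVM 2).trace = ((p 2 : ℝ) : ℂ)
        rw [trine_trace2]
        have hres : (1/6 : ℝ) * (a + Real.sqrt 3 * (u + u) + 3*(1-a)) = p 2 := by
          rw [ha_def, hu_def, hp2]
          linear_combination ((1 - p 0 - 2*p 1)/6) * hr
        simp only [Matrix.cons_val', Matrix.cons_val_zero, Matrix.cons_val_one,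
          Matrix.head_cons, Matrix.empty_val', Matrix.cons_val_fin_one,
          Matrix.of_apply, Matrix.head_fin_const]
        have hC := congrArg Complex.ofReal hres
        push_cast at hC
        push_cast
        linear_combination hC
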